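/- Let L_1(τ,ξ) = τI + Σ ξ_l A_l and let L̃_1(τ,ξ) be the Bérenger split symbol with (j,k) block ξ_j A_j + δ_{jk}τI. Suppose τ ≠ 0 and (τ,ξ) is in the characteristic variety of L (i.e. det L_1(τ,ξ)=0). Then the map S : (Φ_1,...,Φ_d) ↦ -Σ_j Φ_j is a linear bijection from Ker L̃_1(τ,ξ) onto Ker L_1(τ,ξ), with inverse Φ ↦ ((ξ_1/τ)A_1Φ, ..., (ξ_d/τ)A_dΦ). -/
import Mathlib


open Matrix

lemma sum_smul_mulVec (N d : ℕ) (A : Fin d → Matrix (Fin N) (Fin N) ℂ)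
    (ξ : Fin d → ℂ) (v : Fin N → ℂ) :
    (∑ l, ξ l • A l).mulVec v = ∑ l, ξ l • (A l).mulVec v := by
  funext i
  simp [Matrix.mulVec, dotProduct, Finset.sum_apply, Matrix.sum_apply,
    Finset.sum_mul, Finset.mul_sum]
  rw [Finset.sum_comm]
  simp [mul_assoc]

lemma mulVec_sum' (N d : ℕ) (M : Matrix (Fin N) (Fin N) ℂ)
    (Φ : Fin d → Fin N → ℂ) :
    M.mulVec (∑ j, Φ j) = ∑ j, M.mulVec (Φ j) := by
  funext i
  simp [Matrix.mulVec, dotProduct, Finset.sum_apply, Finset.mul_sum]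
  rw [Finset.sum_comm]

/-- For `τ ≠ 0` with `(τ,ξ)` in the characteristic variety of `L`, the map
`S : (Φ₁,…,Φ_d) ↦ -ΣΦⱼ` is a linear bijection from `Ker L̃₁(τ,ξ)` onto
`Ker L₁(τ,ξ)`, with inverse `Φ ↦ ((ξ₁/τ)A₁Φ, …, (ξ_d/τ)A_dΦ)`. -/
theorem berenger_kernel_bijection (N d : ℕ)
    (A : Fin d → Matrix (Fin N) (Fin N) ℂ)
    (τ : ℂ) (hτ : τ ≠ 0) (ξ : Fin d → ℂ)
    (hchar : Matrix.det (τ • (1 : Matrix (Fin N) (Fin N) ℂ) + ∑ l, ξ l • A l) = 0) :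
    -- S maps Ker L̃₁ into Ker L₁
    (∀ Φt : Fin d → Fin N → ℂ,
        (∀ l, τ • Φt l + ξ l • (A l).mulVec (∑ j, Φt j) = 0) →
        (τ • (1 : Matrix (Fin N) (Fin N) ℂ) + ∑ l, ξ l • A l).mulVec (-∑ j, Φt j) = 0)
    ∧
    -- S is injective on Ker L̃₁
    (∀ Φt Ψt : Fin d → Fin N → ℂ,
        (∀ l, τ • Φt l + ξ l • (A l).mulVec (∑ j, Φt j) = 0) →
        (∀ l, τ • Ψt l + ξ l • (A l).mulVec (∑ j, Ψt j) = 0) →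
        (-∑ j, Φt j) = (-∑ j, Ψt j) → Φt = Ψt)
    ∧
    -- the claimed inverse maps Ker L₁ into Ker L̃₁ and is a right inverse of S
    (∀ Φ : Fin N → ℂ,
        (τ • (1 : Matrix (Fin N) (Fin N) ℂ) + ∑ l, ξ l • A l).mulVec Φ = 0 →
        (∀ l, τ • ((ξ l / τ) • (A l).mulVec Φ)
            + ξ l • (A l).mulVec (∑ j, (ξ j / τ) • (A j).mulVec Φ) = 0)
        ∧ (-∑ j, (ξ j / τ) • (A j).mulVec Φ) = Φ) := by
  have expand : ∀ v : Fin N → ℂ,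
      (τ • (1 : Matrix (Fin N) (Fin N) ℂ) + ∑ l, ξ l • A l).mulVec v
        = τ • v + ∑ l, ξ l • (A l).mulVec v := by
    intro v
    rw [Matrix.add_mulVec, Matrix.smul_mulVec, Matrix.one_mulVec,
      sum_smul_mulVec]
  refine ⟨?_, ?_, ?_⟩
  · intro Φt h
    set S := ∑ j, Φt j with hS
    have hsum : τ • S + ∑ l, ξ l • (A l).mulVec S = 0 := by
      have h0 : ∑ l, (τ • Φt l + ξ l • (A l).mulVec S) = 0 := by
        simp [h]
      simpa [Finset.sum_add_distrib, hS, Finset.smul_sum] using h0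
    rw [Matrix.mulVec_neg, expand, hsum, neg_zero]
  · intro Φt Ψt hΦ hΨ hSum
    have hsum : (∑ j, Φt j) = ∑ j, Ψt j := by
      have := congrArg Neg.neg hSum; simpa using this
    funext l
    have h1 := hΦ l
    have h2 := hΨ l
    rw [hsum] at h1
    have : τ • Φt l = τ • Ψt l := by
      have := h1.trans h2.symm
      exact add_right_cancel this
    have := congrArg (fun v => τ⁻¹ • v) this
    simpa [smul_smul, inv_mul_cancel₀ hτ] using this
  · intro Φ hΦ
    rw [expand] at hΦ
    have hkey : ∑ j, (ξ j / τ) • (A j).mulVec Φ = -Φ := by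
      have h2 : ∑ l, ξ l • (A l).mulVec Φ = -(τ • Φ) := by
        linear_combination (norm := module) hΦ
      have : ∑ j, (ξ j / τ) • (A j).mulVec Φ
          = τ⁻¹ • ∑ l, ξ l • (A l).mulVec Φ := by
        rw [Finset.smul_sum]
        refine Finset.sum_congr rfl fun j _ => ?_
        rw [smul_smul, div_eq_inv_mul]
      rw [this, h2, smul_neg, smul_smul, inv_mul_cancel₀ hτ, one_smul]
    constructor
    · intro l
      rw [hkey]
      rw [smul_smul, mul_div_cancel₀ _ hτ, Matrix.mulVec_neg, smul_neg,
        add_neg_cancel]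
    · rw [hkey, neg_neg]
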